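/- Under the MNL with equal price sensitivities, the fixed-price policy p_i = 1 + R* with R* = W((Σ_{i∈X} e^{u_i − 1})/a₀) achieves revenue R*: substituting these prices into R(p) = (Σ_i p_i e^{u_i − p_i})/(Σ_i e^{u_i − p_i} + a₀) yields exactly R*. -/

import Mathlib

/-- Under the MNL with equal price sensitivities, the fixed-price policy
`pᵢ = 1 + R*` with `R* = W((∑ᵢ e^{uᵢ−1})/a₀)` achieves revenue exactly `R*`. -/
theorem fixed_price_achieves_lambert_revenue {n : ℕ} (u : Fin n → ℝ) (a0 : ℝ)
    (ha0 : 0 < a0) (W : ℝ → ℝ)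
    (hW : ∀ y, 0 ≤ y → W y * Real.exp (W y) = y)
    (hW0 : ∀ y, 0 ≤ y → 0 ≤ W y) :
    let Rstar := W ((∑ i, Real.exp (u i - 1)) / a0)
    let p : Fin n → ℝ := fun _ => 1 + Rstar
    (∑ i, p i * Real.exp (u i - p i)) /
      ((∑ i, Real.exp (u i - p i)) + a0) = Rstar := by
  intro Rstar p
  set y := (∑ i, Real.exp (u i - 1)) / a0 with hy
  have hy0 : 0 ≤ y := div_nonneg (Finset.sum_nonneg fun i _ => (Real.exp_pos _).le) ha0.le
  have hR0 : 0 ≤ Rstar := hW0 y hy0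
  have hkey : (∑ i, Real.exp (u i - p i)) = Rstar * a0 := by
    have : (∑ i, Real.exp (u i - p i)) = (∑ i, Real.exp (u i - 1)) * Real.exp (-Rstar) := by
      rw [Finset.sum_mul]
      refine Finset.sum_congr rfl fun i _ => ?_
      rw [← Real.exp_add]
      ring_nf
      congr 1
      simp only [p]
      ring
    rw [this]
    have hsum : (∑ i, Real.exp (u i - 1)) = y * a0 := by
      rw [hy, div_mul_cancel₀]
      exact ha0.ne'
    rw [hsum]
    have := hW y hy0
    rw [← this]
    rw [Real.exp_neg]
    field_simp
    ring
  have hnum : (∑ i, p i * Real.exp (u i - p i)) = (1 + Rstar) * (Rstar * a0) := by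
    rw [← hkey, Finset.mul_sum]
  rw [hnum, hkey]
  have hden : Rstar * a0 + a0 = a0 * (1 + Rstar) := by ring
  rw [hden]
  have hpos : a0 * (1 + Rstar) ≠ 0 := by positivity
  field_simp
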